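/- Assume grade I_1 > 0 and let F = F_K(F) = ⊕_{n≥0} I_n/K·I_n be the fiber cone of the filtration with respect to K, with irrelevant ideal F_+ = ⊕_{n≥1} I_n/K·I_n. Then for every n ≥ 0 the n-th graded component of the F_+-torsion H^0_{F_+}(F) = ⋃_{k≥1}(0 :_F F_+^k) equals (rr_K(I_n) ∩ I_n)/K·I_n. Moreover, if in addition the maximal homogeneous ideal of the associated graded ring G(F) = ⊕_{n≥0} I_n/I_{n+1} has positive grade, then F_+ contains a nonzerodivisor of F if and only if rr_K(I_n) = K·I_n for all n ≥ 0. -/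

import Mathlib

set_option synthInstance.maxHeartbeats 1000000
set_option maxHeartbeats 1000000

open IsLocalRing Polynomial

variable {R : Type*} [CommRing R]

/-- Ratliff–Rush closure of a filtration `{I_n}` with respect to `K`:
`rr_K(I_n) = ⋃_{k ≥ 1} (K·I_{n+k} : I_1^k)`. -/
noncomputable def rrK (K : Ideal R) (I : ℕ → Ideal R) (n : ℕ) : Ideal R :=
  ⨆ k : ℕ, Submodule.colon (K * I (n + (k + 1))) (((I 1) ^ (k + 1) : Ideal R) : Set R)

/-- The Rees algebra of a multiplicative filtration of ideals, realized as the subalgebra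
of `R[X]` of polynomials whose `n`-th coefficient lies in `I_n`. -/
noncomputable def filtRees (I : ℕ → Ideal R) (hI0 : I 0 = ⊤)
    (hImul : ∀ m n : ℕ, I m * I n ≤ I (m + n)) : Subalgebra R R[X] where
  carrier := {p | ∀ n : ℕ, p.coeff n ∈ I n}
  mul_mem' := by
    intro p q hp hq n
    rw [coeff_mul]
    refine Submodule.sum_mem _ ?_
    rintro ⟨i, j⟩ hij
    have hij' : i + j = n := Finset.HasAntidiagonal.mem_antidiagonal.mp hij
    exact hij' ▸ hImul i j (Ideal.mul_mem_mul (hp i) (hq j))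
  add_mem' := by
    intro p q hp hq n
    rw [coeff_add]
    exact Ideal.add_mem _ (hp n) (hq n)
  algebraMap_mem' := by
    intro r n
    rcases Nat.eq_zero_or_pos n with h | h
    · subst h
      simp [hI0]
    · have : n ≠ 0 := h.ne'
      simp [Polynomial.coeff_C, this]

/-- The ideal of the Rees algebra whose degree-`n` component is `K·I_n`; the quotient by it
is the fiber cone `F_K(𝓕) = ⊕_{n ≥ 0} I_n/K·I_n`. -/
noncomputable def filtFibIdeal (I : ℕ → Ideal R) (hI0 : I 0 = ⊤)
    (hImul : ∀ m n : ℕ, I m * I n ≤ I (m + n)) (K : Ideal R) :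
    Ideal (filtRees I hI0 hImul) where
  carrier := {p | ∀ n : ℕ, (p : R[X]).coeff n ∈ K * I n}
  add_mem' := by
    intro a b ha hb n
    show ((a + b : R[X])).coeff n ∈ _
    rw [coeff_add]
    exact Ideal.add_mem _ (ha n) (hb n)
  zero_mem' := by
    intro n
    show ((0 : filtRees I hI0 hImul) : R[X]).coeff n ∈ K * I n
    simp
  smul_mem' := by
    intro c p hp n
    have hc : (c : R[X]) ∈ {p : R[X] | ∀ m : ℕ, p.coeff m ∈ I m} := c.2
    show ((c • p : filtRees I hI0 hImul) : R[X]).coeff n ∈ K * I n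
    have hcp : ((c • p : filtRees I hI0 hImul) : R[X]) = (c : R[X]) * (p : R[X]) := rfl
    rw [hcp, coeff_mul]
    refine Submodule.sum_mem _ ?_
    rintro ⟨i, j⟩ hij
    have hij' : i + j = n := Finset.HasAntidiagonal.mem_antidiagonal.mp hij
    have h1 : (c : R[X]).coeff i * (p : R[X]).coeff j ∈ I i * (K * I j) :=
      Ideal.mul_mem_mul (hc i) (hp j)
    have h2 : I i * (K * I j) ≤ K * I n := by
      rw [mul_left_comm]
      exact hij' ▸ Ideal.mul_mono_right (hImul i j)
    exact h2 h1

/-- The ideal of the Rees algebra whose degree-`n` component is `I_{n+1}`; the quotient by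
it is the associated graded ring `G(𝓕) = ⊕_{n ≥ 0} I_n/I_{n+1}`. -/
noncomputable def filtGIdeal (I : ℕ → Ideal R) (hI0 : I 0 = ⊤)
    (hImul : ∀ m n : ℕ, I m * I n ≤ I (m + n)) :
    Ideal (filtRees I hI0 hImul) where
  carrier := {p | ∀ n : ℕ, (p : R[X]).coeff n ∈ I (n + 1)}
  add_mem' := by
    intro a b ha hb n
    show ((a + b : R[X])).coeff n ∈ _
    rw [coeff_add]
    exact Ideal.add_mem _ (ha n) (hb n)
  zero_mem' := by
    intro n
    show ((0 : filtRees I hI0 hImul) : R[X]).coeff n ∈ I (n + 1)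
    simp
  smul_mem' := by
    intro c p hp n
    have hc : (c : R[X]) ∈ {p : R[X] | ∀ m : ℕ, p.coeff m ∈ I m} := c.2
    show ((c • p : filtRees I hI0 hImul) : R[X]).coeff n ∈ I (n + 1)
    have hcp : ((c • p : filtRees I hI0 hImul) : R[X]) = (c : R[X]) * (p : R[X]) := rfl
    rw [hcp, coeff_mul]
    refine Submodule.sum_mem _ ?_
    rintro ⟨i, j⟩ hij
    have hij' : i + j = n := Finset.HasAntidiagonal.mem_antidiagonal.mp hij
    have h1 : (c : R[X]).coeff i * (p : R[X]).coeff j ∈ I i * I (j + 1) :=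
      Ideal.mul_mem_mul (hc i) (hp j)
    have h2 : I i * I (j + 1) ≤ I (n + 1) := by
      have := hImul i (j + 1)
      rwa [show i + (j + 1) = n + 1 by omega] at this
    exact h2 h1

namespace Stmt4Aux
variable {R : Type*} [CommRing R]

lemma prodI_le (I : ℕ → Ideal R) (hI0 : I 0 = ⊤)
    (hImul : ∀ m n : ℕ, I m * I n ≤ I (m + n)) {ι : Type*} (s : Finset ι) (a : ι → ℕ) :
    (∏ i ∈ s, I (a i)) ≤ I (∑ i ∈ s, a i) := by
  classical
  induction s using Finset.induction_on with
  | empty => simp [hI0]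
  | insert _ _ h ih =>
      rw [Finset.prod_insert h, Finset.sum_insert h]
      exact le_trans (Ideal.mul_mono_right ih) (hImul _ _)

lemma powI_le (I : ℕ → Ideal R) (hI0 : I 0 = ⊤)
    (hImul : ∀ m n : ℕ, I m * I n ≤ I (m + n)) (k : ℕ) : (I 1) ^ k ≤ I k := by
  induction k with
  | zero => simp [hI0]
  | succ n ih =>
      rw [pow_succ]
      exact le_trans (Ideal.mul_mono_left ih) (hImul n 1)

lemma stabI (I : ℕ → Ideal R) (N : ℕ) (hN : ∀ n ≥ N, I 1 * I n = I (n + 1)) (r : ℕ) :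
    I (N + r) = (I 1) ^ r * I N := by
  induction r with
  | zero => simp
  | succ r ih =>
      have h1 : I 1 * I (N + r) = I (N + r + 1) := hN (N + r) (by omega)
      calc I (N + (r + 1)) = I 1 * I (N + r) := by rw [h1, show N + (r+1) = N + r + 1 from rfl]
        _ = I 1 * ((I 1) ^ r * I N) := by rw [ih]
        _ = (I 1) ^ (r + 1) * I N := by ring

lemma span_mul_le_iff (y : R) (P N : Ideal R) :
    Ideal.span {y} * P ≤ N ↔ ∀ w ∈ P, y * w ∈ N := by
  constructor
  · intro h w hw
    exact h (Ideal.mul_mem_mul (Ideal.subset_span rfl) hw)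
  · intro h
    rw [Ideal.mul_le]
    intro r hr s hs
    obtain ⟨a, rfl⟩ := Ideal.mem_span_singleton'.mp hr
    have : a * y * s = a * (y * s) := by ring
    rw [this]
    exact Ideal.mul_mem_left _ _ (h s hs)

lemma ext1 (I : ℕ → Ideal R) (hImul : ∀ m n : ℕ, I m * I n ≤ I (m + n))
    (L : Ideal R) (y : R) (n c : ℕ)
    (h : Ideal.span {y} * (I 1) ^ c ≤ L * I (n + c)) :
    ∀ m, c ≤ m → Ideal.span {y} * (I 1) ^ m ≤ L * I (n + m) := by
  intro m hm
  induction m, hm using Nat.le_induction with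
  | base => exact h
  | succ m hm ih =>
      have e1 : Ideal.span {y} * (I 1) ^ (m + 1) = (Ideal.span {y} * (I 1) ^ m) * I 1 := by
        rw [pow_succ]; ring
      rw [e1]
      calc (Ideal.span {y} * (I 1) ^ m) * I 1 ≤ (L * I (n + m)) * I 1 :=
            Ideal.mul_mono_left ih
        _ = L * (I (n + m) * I 1) := by ring
        _ ≤ L * I (n + (m + 1)) := by
            refine Ideal.mul_mono_right (le_trans (hImul (n + m) 1) ?_)
            rw [show n + m + 1 = n + (m + 1) from rfl]

lemma ext2 (I : ℕ → Ideal R) (hImul : ∀ m n : ℕ, I m * I n ≤ I (m + n))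
    (N : ℕ) (hN : ∀ n ≥ N, I 1 * I n = I (n + 1))
    (L : Ideal R) (y : R) (n c : ℕ)
    (h : Ideal.span {y} * (I 1) ^ c ≤ L * I (n + c)) :
    ∀ m, N + c ≤ m → Ideal.span {y} * I m ≤ L * I (n + m) := by
  intro m hm
  have hs : I m = (I 1) ^ (m - N) * I N := by
    have h0 := stabI I N hN (m - N)
    rwa [show N + (m - N) = m by omega] at h0
  have h1 : Ideal.span {y} * (I 1) ^ (m - N) ≤ L * I (n + (m - N)) :=
    ext1 I hImul L y n c h (m - N) (by omega)
  calc Ideal.span {y} * I m = (Ideal.span {y} * (I 1) ^ (m - N)) * I N := by rw [hs]; ring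
    _ ≤ (L * I (n + (m - N))) * I N := Ideal.mul_mono_left h1
    _ = L * (I (n + (m - N)) * I N) := by ring
    _ ≤ L * I (n + m) := by
        refine Ideal.mul_mono_right (le_trans (hImul _ _) ?_)
        rw [show n + (m - N) + N = n + m by omega]

lemma antiI (I : ℕ → Ideal R) (K : Ideal R) (hK : ∀ n : ℕ, I (n + 1) ≤ K * I n) :
    ∀ a b : ℕ, a ≤ b → I b ≤ I a := by
  intro a b h
  induction b, h using Nat.le_induction with
  | base => exact le_rfl
  | succ b hb ih => exact le_trans (le_trans (hK b) Ideal.mul_le_right) ih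

lemma mem_rrK_iff (I : ℕ → Ideal R) (K : Ideal R)
    (hImul : ∀ m n : ℕ, I m * I n ≤ I (m + n)) (n : ℕ) (y : R) :
    y ∈ rrK K I n ↔ ∃ k : ℕ, Ideal.span {y} * (I 1) ^ (k + 1) ≤ K * I (n + (k + 1)) := by
  have hmono : Monotone (fun k : ℕ =>
      Submodule.colon (K * I (n + (k + 1))) (((I 1) ^ (k + 1) : Ideal R) : Set R)) := by
    refine monotone_nat_of_le_succ ?_
    intro k r hr
    rw [Submodule.mem_colon] at hr ⊢
    have hr' : Ideal.span {r} * (I 1) ^ (k + 1) ≤ K * I (n + (k + 1)) := by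
      rw [span_mul_le_iff]
      intro w hw
      simpa [smul_eq_mul] using hr w hw
    have : Ideal.span {r} * (I 1) ^ (k + 2) ≤ K * I (n + (k + 2)) := by
      have e1 : Ideal.span {r} * (I 1) ^ (k + 2) = (Ideal.span {r} * (I 1) ^ (k + 1)) * I 1 := by
        rw [pow_succ]; ring
      rw [e1]
      calc (Ideal.span {r} * (I 1) ^ (k + 1)) * I 1 ≤ (K * I (n + (k + 1))) * I 1 :=
            Ideal.mul_mono_left hr'
        _ = K * (I (n + (k + 1)) * I 1) := by ring
        _ ≤ K * I (n + (k + 2)) := by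
            refine Ideal.mul_mono_right (le_trans (hImul _ 1) ?_)
            rw [show n + (k + 1) + 1 = n + (k + 2) from rfl]
    intro p hp
    have h2 := this (Ideal.mul_mem_mul (Ideal.subset_span rfl) hp)
    simpa [smul_eq_mul] using h2
  rw [rrK, Submodule.mem_iSup_of_directed _ hmono.directed_le]
  constructor
  · rintro ⟨k, hk⟩
    refine ⟨k, ?_⟩
    rw [span_mul_le_iff]
    intro w hw
    rw [Submodule.mem_colon] at hk
    simpa [smul_eq_mul] using hk w hw
  · rintro ⟨k, hk⟩
    refine ⟨k, ?_⟩
    rw [Submodule.mem_colon]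
    intro p hp
    have h2 := hk (Ideal.mul_mem_mul (Ideal.subset_span rfl) hp)
    simpa [smul_eq_mul] using h2

lemma KI_le_rrK (I : ℕ → Ideal R) (K : Ideal R)
    (hImul : ∀ m n : ℕ, I m * I n ≤ I (m + n)) (n : ℕ) :
    K * I n ≤ rrK K I n := by
  intro y hy
  rw [mem_rrK_iff I K hImul]
  refine ⟨0, ?_⟩
  rw [span_mul_le_iff]
  intro w hw
  rw [pow_one] at hw
  have h1 : y * w ∈ (K * I n) * I 1 := Ideal.mul_mem_mul hy hw
  have h2 : (K * I n) * I 1 ≤ K * I (n + 1) := by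
    rw [mul_assoc]
    exact Ideal.mul_mono_right (hImul n 1)
  exact h2 h1

lemma pow_coeff_zero {p : R[X]} (hp : p.coeff 0 = 0) {l i : ℕ} (h : i < l) :
    (p ^ l).coeff i = 0 := by
  obtain ⟨q, rfl⟩ := Polynomial.X_dvd_iff.mpr hp
  rw [mul_pow, mul_comm, Polynomial.coeff_mul_X_pow']
  simp [Nat.not_le.mpr h]

lemma yXj_mem (I : ℕ → Ideal R) (hI0 : I 0 = ⊤) (hImul : ∀ m n : ℕ, I m * I n ≤ I (m + n))
    (y : R) (j : ℕ) (hy : y ∈ I j) :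
    (C y * X ^ j : R[X]) ∈ filtRees I hI0 hImul := by
  show ∀ m : ℕ, (C y * X ^ j : R[X]).coeff m ∈ I m
  intro m
  rw [coeff_C_mul, coeff_X_pow]
  by_cases h : m = j
  · subst h; simpa using hy
  · simp [h]

lemma keyGen (I : ℕ → Ideal R) (hI0 : I 0 = ⊤) (hImul : ∀ m n : ℕ, I m * I n ≤ I (m + n))
    (T : ℕ → Ideal R)
    (Q : Ideal (filtRees I hI0 hImul))
    (hQmem : ∀ p : filtRees I hI0 hImul, p ∈ Q ↔ ∀ m : ℕ, (p : R[X]).coeff m ∈ T m)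
    (g : filtRees I hI0 hImul)
    (hgnzd : Ideal.Quotient.mk Q g ∈ nonZeroDivisors ((filtRees I hI0 hImul) ⧸ Q))
    (L : Ideal R) (s : ℕ) (hs : (g : R[X]).coeff 0 ^ s ∈ L)
    (j : ℕ) (y : R) (hy : y ∈ I j) (M : ℕ)
    (hT1 : ∀ i : ℕ, ∀ a ∈ L, ∀ b ∈ I i, a * b * y ∈ T (i + j))
    (hT2 : ∀ i : ℕ, M < i → ∀ b ∈ I i, y * b ∈ T (i + j)) :
    y ∈ T j := by
  classical
  set t := s + M + 1 with ht
  set G : R[X] := (g : R[X]) with hG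
  set g0 : R := G.coeff 0 with hg0def
  have hcoeff0 : (G - C g0).coeff 0 = 0 := by simp [hg0def]
  have hhl : ∀ l i : ℕ, ((G - C g0) ^ l).coeff i ∈ I i := by
    intro l i
    have h1 : (((g - algebraMap R (filtRees I hI0 hImul) g0) ^ l :
        filtRees I hI0 hImul) : R[X]) = (G - C g0) ^ l := by
      push_cast
      rw [Polynomial.algebraMap_eq, hG]
    rw [← h1]
    exact ((g - algebraMap R (filtRees I hI0 hImul) g0) ^ l).2 i
  have claim : ∀ i : ℕ, (G ^ t).coeff i * y ∈ T (i + j) := by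
    intro i
    have hexp : G ^ t = ∑ k ∈ Finset.range (t + 1),
        C g0 ^ k * (G - C g0) ^ (t - k) * (t.choose k : R[X]) := by
      conv_lhs => rw [show G = C g0 + (G - C g0) by ring]
      exact add_pow _ _ t
    rw [hexp, Polynomial.finset_sum_coeff, Finset.sum_mul]
    refine Submodule.sum_mem _ ?_
    intro k hk
    have hk' : k ≤ t := Nat.lt_succ_iff.mp (Finset.mem_range.mp hk)
    have hcoeffterm : (C g0 ^ k * (G - C g0) ^ (t - k) * (t.choose k : R[X])).coeff i
        = g0 ^ k * ((G - C g0) ^ (t - k)).coeff i * (t.choose k : R) := by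
      rw [← map_pow, ← Polynomial.C_eq_natCast, coeff_mul_C, coeff_C_mul]
    rw [hcoeffterm]
    by_cases hks : s ≤ k
    · have hgk : g0 ^ k ∈ L := by
        rw [show k = (k - s) + s by omega, pow_add]
        exact Ideal.mul_mem_left _ _ hs
      have hmem := hT1 i _ hgk _ (hhl (t - k) i)
      have he : g0 ^ k * ((G - C g0) ^ (t - k)).coeff i * (t.choose k : R) * y
          = (g0 ^ k * ((G - C g0) ^ (t - k)).coeff i * y) * (t.choose k : R) := by ring
      rw [he]
      exact Ideal.mul_mem_right _ _ hmem
    · by_cases hi : i < t - k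
      · rw [pow_coeff_zero hcoeff0 hi]
        simp
      · have hiM : M < i := by omega
        have hmem := hT2 i hiM _ (hhl (t - k) i)
        have he : g0 ^ k * ((G - C g0) ^ (t - k)).coeff i * (t.choose k : R) * y
            = (y * ((G - C g0) ^ (t - k)).coeff i) * (g0 ^ k * (t.choose k : R)) := by ring
        rw [he]
        exact Ideal.mul_mem_right _ _ hmem
  set w : filtRees I hI0 hImul := ⟨C y * X ^ j, yXj_mem I hI0 hImul y j hy⟩ with hw
  have hpQ : g ^ t * w ∈ Q := by
    rw [hQmem]
    intro m
    have hcoe : ((g ^ t * w : filtRees I hI0 hImul) : R[X]) = (G ^ t * C y) * X ^ j := by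
      push_cast [hw]
      rw [hG]
      ring
    rw [hcoe, Polynomial.coeff_mul_X_pow']
    by_cases hm : j ≤ m
    · rw [if_pos hm, coeff_mul_C]
      have h2 := claim (m - j)
      rwa [show m - j + j = m by omega] at h2
    · rw [if_neg hm]; exact zero_mem _
  have h0 : (Ideal.Quotient.mk Q w) * (Ideal.Quotient.mk Q g) ^ t = 0 := by
    rw [← map_pow, ← map_mul, mul_comm, Ideal.Quotient.eq_zero_iff_mem]
    exact hpQ
  have hw0 : Ideal.Quotient.mk Q w = 0 := by
    have hp := pow_mem hgnzd t
    rw [mem_nonZeroDivisors_iff] at hp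
    exact hp.2 _ h0
  have hwQ : w ∈ Q := (Ideal.Quotient.eq_zero_iff_mem).mp hw0
  have h3 := (hQmem w).mp hwQ j
  rw [hw] at h3
  simpa [coeff_C_mul, coeff_X_pow] using h3


lemma memI_of_colon (I : ℕ → Ideal R) (hI0 : I 0 = ⊤)
    (hImul : ∀ m n : ℕ, I m * I n ≤ I (m + n)) (K : Ideal R)
    (hK : ∀ n : ℕ, I (n + 1) ≤ K * I n)
    (N : ℕ) (hN : ∀ n ≥ N, I 1 * I n = I (n + 1))
    (g : filtRees I hI0 hImul) (s : ℕ) (hs : (g : R[X]).coeff 0 ^ s ∈ I 1)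
    (hgnzd : Ideal.Quotient.mk (filtGIdeal I hI0 hImul) g ∈
      nonZeroDivisors ((filtRees I hI0 hImul) ⧸ filtGIdeal I hI0 hImul)) :
    ∀ n : ℕ, ∀ y : R, ∀ c : ℕ, Ideal.span {y} * (I 1) ^ c ≤ I (n + c) → y ∈ I n := by
  intro n
  induction n with
  | zero => intro y c h; simp [hI0]
  | succ n ih =>
      intro y c h
      have hyn : y ∈ I n := ih y c (le_trans h (antiI I K hK _ _ (by omega)))
      refine keyGen I hI0 hImul (fun m => I (m + 1)) (filtGIdeal I hI0 hImul)
        (fun p => Iff.rfl) g hgnzd (I 1) s hs n y hyn (N + c) ?_ ?_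
      · intro i a ha b hb
        have h1 : a * b ∈ I 1 * I i := Ideal.mul_mem_mul ha hb
        have h2 : (a * b) * y ∈ (I 1 * I i) * I n := Ideal.mul_mem_mul h1 hyn
        have h3 : (I 1 * I i) * I n ≤ I (i + n + 1) := by
          refine le_trans (Ideal.mul_mono_left (hImul 1 i)) (le_trans (hImul (1 + i) n) ?_)
          rw [show 1 + i + n = i + n + 1 by omega]
        exact h3 h2
      · intro i hi b hb
        have hle : Ideal.span {y} * I i ≤ I ((n + 1) + i) := by
          have h4 : Ideal.span {y} * (I 1) ^ c ≤ ⊤ * I ((n + 1) + c) := by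
            rw [Ideal.top_mul]; exact h
          have h5 := ext2 I hImul N hN ⊤ y (n + 1) c h4 i (by omega)
          rwa [Ideal.top_mul] at h5
        have h6 := hle (Ideal.mul_mem_mul (Ideal.subset_span rfl) hb)
        rwa [show (n + 1) + i = i + n + 1 by omega] at h6


lemma ass_subset_union {A : Type*} [CommRing A] {M : Type*} [AddCommGroup M] [Module A M]
    (N : Submodule A M) :
    associatedPrimes A M ⊆ associatedPrimes A N ∪ associatedPrimes A (M ⧸ N) :=
  associatedPrimes.subset_union_of_exact (f := N.subtype) (g := N.mkQ) N.injective_subtype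
    (LinearMap.exact_subtype_mkQ N)

lemma ass_span_singleton {A : Type*} [CommRing A] {M : Type*} [AddCommGroup M] [Module A M]
    (x : M) (hp : ((Submodule.span A {x}).annihilator).IsPrime) :
    ∀ q ∈ associatedPrimes A (Submodule.span A {x}),
      q = (Submodule.span A {x}).annihilator := by
  rintro q ⟨hq, w, rfl⟩
  obtain ⟨c, hc⟩ := Submodule.mem_span_singleton.mp w.2
  have hw0 : w ≠ 0 := by
    rintro rfl
    exact hq.ne_top (by rw [Submodule.colon_singleton_zero, Ideal.radical_top])
  have hcx : ¬ c • x = 0 := by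
    rw [hc]
    intro h
    exact hw0 (Subtype.ext (by simpa using h))
  have hcol : (⊥ : Submodule A (Submodule.span A {x})).colon {w} =
      (Submodule.span A {x}).annihilator := by
   ext r
   rw [Submodule.mem_colon_singleton, Submodule.mem_bot,
     Submodule.mem_annihilator_span_singleton]
   have key : (r • w = 0) ↔ (r * c) • x = 0 := by
     rw [Subtype.ext_iff, mul_smul]
     simp [hc]
   rw [key]
   constructor
   · intro h
     have hmem : r * c ∈ (Submodule.span A {x}).annihilator :=
       (Submodule.mem_annihilator_span_singleton _ _).mpr h
     rcases hp.mem_or_mem hmem with h1 | h2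
     · exact (Submodule.mem_annihilator_span_singleton _ _).mp h1
     · exact absurd ((Submodule.mem_annihilator_span_singleton _ _).mp h2) hcx
   · intro h
     rw [mul_comm, mul_smul, h, smul_zero]
  rw [hcol, hp.radical]

lemma ass_finite (A : Type*) [CommRing A] [IsNoetherianRing A] :
    (associatedPrimes A A).Finite :=
  associatedPrimes.finite A A

lemma exists_ann {A : Type*} [CommRing A] [IsNoetherianRing A] (J : Ideal A)
    (hJ : ∀ a ∈ J, ∃ z : A, z ≠ 0 ∧ z * a = 0) :
    ∃ z : A, z ≠ 0 ∧ ∀ a ∈ J, a * z = 0 := by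
  classical
  have hfin := ass_finite A
  have hsub : (J : Set A) ⊆ ⋃ p ∈ ((hfin.toFinset : Finset (Ideal A)) : Set (Ideal A)),
      (p : Set A) := by
    intro a ha
    obtain ⟨z, hz0, hz⟩ := hJ a ha
    have hmem : a ∈ ⋃ p ∈ associatedPrimes A A, (p : Set A) := by
      rw [biUnion_associatedPrimes_eq_zero_divisors]
      exact ⟨z, hz0, by rw [smul_eq_mul, mul_comm]; exact hz⟩
    simp only [Set.mem_iUnion, SetLike.mem_coe, exists_prop] at hmem ⊢
    obtain ⟨p, hp, hap⟩ := hmem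
    exact ⟨p, by simpa [hfin.mem_toFinset] using hp, hap⟩
  have hprime : ∀ p ∈ hfin.toFinset, p ≠ (⊥ : Ideal A) → p ≠ ⊥ → p.IsPrime := by
    intro p hp _ _
    exact (hfin.mem_toFinset.mp hp).isPrime
  obtain ⟨p, hps, hJp⟩ := (Ideal.subset_union_prime ⊥ ⊥ hprime).mp hsub
  obtain ⟨hprime', z, hz⟩ := isAssociatedPrime_iff.mp (hfin.mem_toFinset.mp hps)
  have hz0 : z ≠ 0 := by
    rintro rfl
    exact hprime'.ne_top (by rw [hz, Submodule.colon_singleton_zero])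
  refine ⟨z, hz0, ?_⟩
  intro a ha
  have hap : a ∈ p := hJp ha
  rw [hz] at hap
  have := Submodule.mem_colon_singleton.mp hap
  simpa [smul_eq_mul] using this


lemma filtRees_noetherian (I : ℕ → Ideal R) (hI0 : I 0 = ⊤)
    (hImul : ∀ m n : ℕ, I m * I n ≤ I (m + n)) [IsNoetherianRing R]
    (N : ℕ) (hN : ∀ n ≥ N, I 1 * I n = I (n + 1)) :
    IsNoetherianRing (filtRees I hI0 hImul) := by
  classical
  have hfg : ∀ j : ℕ, ∃ t : Finset R, Ideal.span ↑t = I j := fun j =>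
    IsNoetherian.noetherian (I j)
  choose s hs using hfg
  set T : Finset R[X] :=
    (Finset.range (N + 2)).biUnion (fun j => (s j).image (fun r => C r * X ^ j)) with hT
  have key : ∀ m : ℕ, ∀ y ∈ I m, (C y * X ^ m : R[X]) ∈ Algebra.adjoin R (T : Set R[X]) := by
    intro m
    induction m using Nat.strong_induction_on with
    | _ m ihm =>
      intro y hy
      rcases Nat.eq_zero_or_pos m with rfl | hm
      · have : (C y * X ^ 0 : R[X]) = algebraMap R R[X] y := by
          simp [Polynomial.algebraMap_eq]
        rw [this]
        exact Subalgebra.algebraMap_mem _ y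
      · by_cases hmN : m ≤ N + 1
        · have hy' : y ∈ Ideal.span (↑(s m) : Set R) := by rw [hs m]; exact hy
          clear hy
          induction hy' using Submodule.span_induction with
          | mem r hr =>
              refine Algebra.subset_adjoin ?_
              rw [hT]
              simp only [Finset.coe_biUnion, Finset.coe_image, Set.mem_iUnion,
                Set.mem_image, Finset.mem_coe, Finset.mem_range]
              exact ⟨m, by omega, r, hr, rfl⟩
          | zero =>
              have h0 : (C (0 : R) * X ^ m : R[X]) = 0 := by simp
              rw [h0]
              exact zero_mem _
          | add a b _ _ ha hb =>
              rw [map_add, add_mul]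
              exact add_mem ha hb
          | smul a b _ hb =>
              rw [smul_eq_mul, map_mul, mul_assoc]
              exact mul_mem (Subalgebra.algebraMap_mem _ a) hb
        · have hstep : I 1 * I (m - 1) = I m := by
            have h1 := hN (m - 1) (by omega)
            rwa [show m - 1 + 1 = m by omega] at h1
          have hy' : y ∈ I 1 * I (m - 1) := by rw [hstep]; exact hy
          refine Submodule.mul_induction_on hy' ?_ ?_
          · intro a ha b hb
            have h1 : (C a * X ^ 1 : R[X]) ∈ Algebra.adjoin R (T : Set R[X]) :=
              ihm 1 (by omega) a ha
            have h2 : (C b * X ^ (m - 1) : R[X]) ∈ Algebra.adjoin R (T : Set R[X]) :=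
              ihm (m - 1) (by omega) b hb
            have hx : (X : R[X]) ^ m = X ^ 1 * X ^ (m - 1) := by
              rw [← pow_add]
              congr 1
              omega
            have he : (C (a * b) * X ^ m : R[X]) = (C a * X ^ 1) * (C b * X ^ (m - 1)) := by
              rw [map_mul, hx]
              ring
            rw [he]
            exact mul_mem h1 h2
          · intro a b ha hb
            rw [map_add, add_mul]
            exact add_mem ha hb
  have hadj : Algebra.adjoin R ((T : Set R[X])) = filtRees I hI0 hImul := by
    apply le_antisymm
    · rw [Algebra.adjoin_le_iff]
      intro x hx
      rw [hT] at hx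
      simp only [Finset.coe_biUnion, Finset.coe_image, Set.mem_iUnion,
        Set.mem_image, Finset.mem_coe, Finset.mem_range] at hx
      obtain ⟨j, _, r, hr, rfl⟩ := hx
      have hrI : r ∈ I j := by
        rw [← hs j]
        exact Ideal.subset_span hr
      exact yXj_mem I hI0 hImul r j hrI
    · intro p hp
      have hp' : ∀ n : ℕ, p.coeff n ∈ I n := hp
      rw [p.as_sum_support]
      refine Subalgebra.sum_mem _ ?_
      intro i _
      rw [← Polynomial.C_mul_X_pow_eq_monomial]
      exact key i (p.coeff i) (hp' i)
  have hFG : (filtRees I hI0 hImul).FG := ⟨T, hadj⟩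
  haveI hft : Algebra.FiniteType R (filtRees I hI0 hImul) :=
    (Subalgebra.fg_iff_finiteType _).mp hFG
  exact Algebra.FiniteType.isNoetherianRing R _


end Stmt4Aux

/-- For the fiber cone `F = F_K(𝓕)` of a Hilbert filtration with respect to `K` in a
Noetherian local ring with `grade I_1 > 0`:
(a) for every `n ≥ 0`, the `n`-th graded component of `H^0_{F_+}(F) = ⋃_k (0 :_F F_+^k)`
equals `(rr_K(I_n) ∩ I_n)/K·I_n` (stated elementwise: for `y ∈ I_n`, the image `y°`
is annihilated by some power of `F_+` iff `y ∈ rr_K(I_n)`); and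
(b) if moreover the maximal homogeneous ideal of `G(𝓕)` has positive grade (i.e. contains
a nonzerodivisor of `G(𝓕)`), then `F_+` contains a nonzerodivisor of `F` iff
`rr_K(I_n) = K·I_n` for all `n ≥ 0`. -/
theorem stmt4 [IsNoetherianRing R] [IsLocalRing R] [Infinite (ResidueField R)]
    (hdim : (0 : WithBot ℕ∞) < ringKrullDim R)
    (I : ℕ → Ideal R) (K : Ideal R)
    (hI0 : I 0 = ⊤)
    (hImul : ∀ m n : ℕ, I m * I n ≤ I (m + n))
    (hIstab : ∃ N : ℕ, ∀ n ≥ N, I 1 * I n = I (n + 1))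
    (hIprim : (I 1).radical = maximalIdeal R)
    (hK : ∀ n : ℕ, I (n + 1) ≤ K * I n)
    (hgrade : ∃ x ∈ I 1, x ∈ nonZeroDivisors R) :
    (∀ n : ℕ, ∀ y ∈ I n,
      ((∃ k : ℕ, 1 ≤ k ∧ ∀ a : Fin k → ℕ, (∀ i, 1 ≤ a i) →
          ∀ z ∈ ∏ i, I (a i), y * z ∈ K * I (n + ∑ i, a i)) ↔
        y ∈ rrK K I n)) ∧
    ((∃ g : filtRees I hI0 hImul, (g : R[X]).coeff 0 ∈ maximalIdeal R ∧
        Ideal.Quotient.mk (filtGIdeal I hI0 hImul) g ∈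
          nonZeroDivisors (↥(filtRees I hI0 hImul) ⧸ filtGIdeal I hI0 hImul)) →
      ((∃ f : filtRees I hI0 hImul, (f : R[X]).coeff 0 ∈ K ∧
          Ideal.Quotient.mk (filtFibIdeal I hI0 hImul K) f ∈
            nonZeroDivisors (↥(filtRees I hI0 hImul) ⧸ filtFibIdeal I hI0 hImul K)) ↔
        ∀ n : ℕ, rrK K I n = K * I n)) := by
  obtain ⟨N, hN⟩ := hIstab
  constructor
  · -- part (a)
    intro n y hy
    constructor
    · rintro ⟨k, hk1, hk⟩
      rw [Stmt4Aux.mem_rrK_iff I K hImul]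
      refine ⟨k - 1, ?_⟩
      rw [Stmt4Aux.span_mul_le_iff]
      intro w hw
      have hww : w ∈ ∏ _i : Fin k, I 1 := by
        rw [show (k - 1) + 1 = k by omega] at hw
        simpa [Finset.prod_const, Finset.card_univ] using hw
      have h1 := hk (fun _ => 1) (fun _ => le_refl 1) w hww
      have h2 : (∑ _i : Fin k, 1) = k := by simp
      rw [h2] at h1
      rwa [show n + (k - 1 + 1) = n + k by omega]
    · intro hyrr
      rw [Stmt4Aux.mem_rrK_iff I K hImul] at hyrr
      obtain ⟨k0, hk0⟩ := hyrr
      refine ⟨N + k0 + 1, by omega, ?_⟩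
      intro a ha z hz
      have hsum : N + k0 + 1 ≤ ∑ i, a i := by
        have h1 : (∑ _i : Fin (N + k0 + 1), 1) ≤ ∑ i, a i :=
          Finset.sum_le_sum (fun i _ => ha i)
        simpa using h1
      have hzI : z ∈ I (∑ i, a i) := Stmt4Aux.prodI_le I hI0 hImul Finset.univ a hz
      have hle : Ideal.span {y} * I (∑ i, a i) ≤ K * I (n + ∑ i, a i) :=
        Stmt4Aux.ext2 I hImul N hN K y n (k0 + 1) hk0 _ (by omega)
      exact hle (Ideal.mul_mem_mul (Ideal.subset_span rfl) hzI)
  · rintro ⟨g, hg0, hgnzd⟩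
    obtain ⟨sP, hsP⟩ : ∃ sP : ℕ, (IsLocalRing.maximalIdeal R) ^ sP ≤ I 1 := by
      refine Ideal.exists_pow_le_of_le_radical_of_fg ?_ ?_
      · rw [hIprim]
      · exact IsNoetherian.noetherian _
    have hgs : (g : R[X]).coeff 0 ^ sP ∈ I 1 := hsP (Ideal.pow_mem_pow hg0 sP)
    constructor
    · rintro ⟨f, hf0, hfnzd⟩ n
      apply le_antisymm
      · intro y hyrr
        rw [Stmt4Aux.mem_rrK_iff I K hImul] at hyrr
        obtain ⟨k0, hk0⟩ := hyrr
        have hKle : K * I (n + (k0 + 1)) ≤ I (n + (k0 + 1)) := Ideal.mul_le_right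
        have hyn : y ∈ I n := Stmt4Aux.memI_of_colon I hI0 hImul K hK N hN g sP hgs hgnzd
          n y (k0 + 1) (le_trans hk0 hKle)
        refine Stmt4Aux.keyGen I hI0 hImul (fun m => K * I m) (filtFibIdeal I hI0 hImul K)
          (fun p => Iff.rfl) f hfnzd K 1 (by simpa using hf0) n y hyn (N + (k0 + 1)) ?_ ?_
        · intro i a ha b hb
          have h1 : b * y ∈ I i * I n := Ideal.mul_mem_mul hb hyn
          have h2 : a * (b * y) ∈ K * I (i + n) := Ideal.mul_mem_mul ha (hImul i n h1)
          rwa [← mul_assoc] at h2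
        · intro i hi b hb
          have hle := Stmt4Aux.ext2 I hImul N hN K y n (k0 + 1) hk0 i (by omega)
          have h3 := hle (Ideal.mul_mem_mul (Ideal.subset_span rfl) hb)
          rwa [show n + i = i + n by omega] at h3
      · exact Stmt4Aux.KI_le_rrK I K hImul n
    · intro hrr
      by_contra hcon
      push_neg at hcon
      haveI hNoeth : IsNoetherianRing (filtRees I hI0 hImul) :=
        Stmt4Aux.filtRees_noetherian I hI0 hImul N hN
      haveI : IsNoetherianRing ((filtRees I hI0 hImul) ⧸ filtFibIdeal I hI0 hImul K) :=
        isNoetherianRing_of_surjective _ _ (Ideal.Quotient.mk _) Ideal.Quotient.mk_surjective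
      set φ : (filtRees I hI0 hImul) →+* R :=
        (Polynomial.constantCoeff (R := R)).comp
          ((filtRees I hI0 hImul).val.toRingHom) with hφ
      set J0 : Ideal (filtRees I hI0 hImul) := Ideal.comap φ K with hJ0
      set J : Ideal ((filtRees I hI0 hImul) ⧸ filtFibIdeal I hI0 hImul K) :=
        Ideal.map (Ideal.Quotient.mk (filtFibIdeal I hI0 hImul K)) J0 with hJdef
      have hJ : ∀ a ∈ J, ∃ z, z ≠ 0 ∧ z * a = 0 := by
        intro a ha
        obtain ⟨f, hfJ0, rfl⟩ :=
          (Ideal.mem_map_iff_of_surjective _ Ideal.Quotient.mk_surjective).mp ha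
        have hf0 : (f : R[X]).coeff 0 ∈ K := by
          have h4 := Ideal.mem_comap.mp hfJ0
          simpa [hφ, Polynomial.constantCoeff_apply] using h4
        have hnz := hcon f hf0
        rw [mem_nonZeroDivisors_iff] at hnz
        replace hnz : ¬ ∀ x, x * Ideal.Quotient.mk _ f = 0 → x = 0 := fun h =>
          hnz ⟨fun x hx => h x ((mul_comm x _).trans hx), h⟩
        push_neg at hnz
        obtain ⟨z, hz1, hz2⟩ := hnz
        exact ⟨z, hz2, hz1⟩
      obtain ⟨z, hz0, hzJ⟩ := Stmt4Aux.exists_ann (A := (filtRees I hI0 hImul) ⧸ filtFibIdeal I hI0 hImul K) J hJ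
      obtain ⟨q, rfl⟩ := Ideal.Quotient.mk_surjective z
      have hqf : ¬ (∀ m : ℕ, ((q : R[X])).coeff m ∈ K * I m) := by
        intro h
        exact hz0 (Ideal.Quotient.eq_zero_iff_mem.mpr h)
      push_neg at hqf
      obtain ⟨m, hm⟩ := hqf
      have hcol : ∀ w ∈ (I 1) ^ (0 + 1), (q : R[X]).coeff m * w ∈ K * I (m + (0 + 1)) := by
        intro w hw
        rw [pow_one] at hw
        have hwmem : (C w * X ^ 1 : R[X]) ∈ filtRees I hI0 hImul :=
          Stmt4Aux.yXj_mem I hI0 hImul w 1 hw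
        have hw0 : ((⟨C w * X ^ 1, hwmem⟩ : filtRees I hI0 hImul) : R[X]).coeff 0 ∈ K := by
          simp
        have hwJ0 : (⟨C w * X ^ 1, hwmem⟩ : filtRees I hI0 hImul) ∈ J0 := by
          rw [hJ0, Ideal.mem_comap]
          simp only [hφ, RingHom.coe_comp, Function.comp_apply,
            Polynomial.constantCoeff_apply]
          exact hw0
        have hmk : Ideal.Quotient.mk (filtFibIdeal I hI0 hImul K)
            (⟨C w * X ^ 1, hwmem⟩ : filtRees I hI0 hImul) ∈ J :=
          Ideal.mem_map_of_mem _ hwJ0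
        have h0 := hzJ _ hmk
        have hfib : (⟨C w * X ^ 1, hwmem⟩ : filtRees I hI0 hImul) * q ∈
            filtFibIdeal I hI0 hImul K := by
          rw [← Ideal.Quotient.eq_zero_iff_mem, map_mul]
          exact h0
        have hc := hfib (m + 1)
        have hcoeff : (((⟨C w * X ^ 1, hwmem⟩ : filtRees I hI0 hImul) * q :
            filtRees I hI0 hImul) : R[X]).coeff (m + 1) = w * (q : R[X]).coeff m := by
          push_cast
          rw [pow_one, mul_assoc, coeff_C_mul, coeff_X_mul]
        rw [hcoeff] at hc
        rwa [mul_comm ((q : R[X]).coeff m) w]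
      have hym : (q : R[X]).coeff m ∈ rrK K I m := by
        rw [Stmt4Aux.mem_rrK_iff I K hImul]
        refine ⟨0, ?_⟩
        rw [Stmt4Aux.span_mul_le_iff]
        exact hcol
      rw [hrr m] at hym
      exact hm hym
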